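/- arXiv:1407.4551 — 2 statements merged into one kernel-verified Lean document; each statement's English description precedes it below -/
import Mathlib

section
/- Let B be an invertible upper triangular real m×m matrix with positive diagonal entries and set C = B^T B. Then for any positive definite real symmetric m×m matrix A and κ ∈ ℝ^m, q_κ(B^T A B) = q_κ(C)·q_κ(A). -/
open MeasureTheory Matrix BigOperators Real

noncomputable section

/-- Determinant of the leading `p × p` principal submatrix. -/
def leadDet {m : ℕ} (A : Matrix (Fin m) (Fin m) ℝ) (p : ℕ) (h : p ≤ m) : ℝ :=
  (A.submatrix (fun i : Fin p => Fin.castLE h i) (fun i : Fin p => Fin.castLE h i)).det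

/-- Generalized power `q_κ(A) = |A_m|^{k_m} ∏_{i<m} |A_i|^{k_i - k_{i+1}}`. -/
def qpow {m : ℕ} (κ : Fin m → ℝ) (A : Matrix (Fin m) (Fin m) ℝ) : ℝ :=
  ∏ i : Fin m, leadDet A ((i : ℕ) + 1) i.isLt ^
    (κ i - if h : (i : ℕ) + 1 < m then κ ⟨(i : ℕ) + 1, h⟩ else 0)

lemma sum_castLE {m p : ℕ} (h : p ≤ m) (f : Fin m → ℝ)
    (hf : ∀ k : Fin m, p ≤ (k : ℕ) → f k = 0) :
    ∑ k : Fin m, f k = ∑ k : Fin p, f (Fin.castLE h k) := by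
  classical
  have h1 : ∑ k : Fin p, f (Fin.castLE h k)
      = ∑ k ∈ Finset.univ.map (Fin.castLEEmb h), f k := by rw [Finset.sum_map]; rfl
  rw [h1]
  refine (Finset.sum_subset (Finset.subset_univ _) ?_).symm
  intro k _ hk
  refine hf k ?_
  by_contra hlt
  push_neg at hlt
  exact hk (Finset.mem_map.mpr ⟨⟨(k : ℕ), hlt⟩, Finset.mem_univ _, by
    simp [Fin.castLEEmb, Fin.ext_iff]⟩)

lemma submatrix_conj {m p : ℕ} (h : p ≤ m) (A B : Matrix (Fin m) (Fin m) ℝ)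
    (hB : B.BlockTriangular id) :
    (Bᵀ * A * B).submatrix (Fin.castLE h) (Fin.castLE h) =
      (B.submatrix (Fin.castLE h) (Fin.castLE h))ᵀ *
        A.submatrix (Fin.castLE h) (Fin.castLE h) *
        B.submatrix (Fin.castLE h) (Fin.castLE h) := by
  ext i j
  simp only [submatrix_apply, mul_apply, transpose_apply]
  rw [sum_castLE h _ (fun l hl => ?_)]
  · refine Finset.sum_congr rfl fun l _ => ?_
    congr 1
    rw [sum_castLE h _ (fun k hk => ?_)]
    have : B k (Fin.castLE h i) = 0 := hB (by simpa [Fin.lt_def] using lt_of_lt_of_le i.isLt hk)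
    simp [this]
  · have : B l (Fin.castLE h j) = 0 := hB (by simpa [Fin.lt_def] using lt_of_lt_of_le j.isLt hl)
    simp [this]

lemma posdef_sub {m p : ℕ} (h : p ≤ m) {A : Matrix (Fin m) (Fin m) ℝ} (hA : A.PosDef) :
    (A.submatrix (Fin.castLE h) (Fin.castLE h)).PosDef := by
  classical
  refine PosDef.of_dotProduct_mulVec_pos (hA.1.submatrix _) (fun x hx => ?_)
  set y : Fin m → ℝ := fun k => if hk : (k : ℕ) < p then x ⟨(k : ℕ), hk⟩ else 0 with hy
  have hy0 : y ≠ 0 := by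
    obtain ⟨i, hi⟩ := Function.ne_iff.mp hx
    refine Function.ne_iff.mpr ⟨Fin.castLE h i, ?_⟩
    simpa [hy, i.isLt] using hi
  have key := hA.dotProduct_mulVec_pos hy0
  have heq : star y ⬝ᵥ A.mulVec y
      = star x ⬝ᵥ (A.submatrix (Fin.castLE h) (Fin.castLE h)).mulVec x := by
    simp only [dotProduct, mulVec, Pi.star_apply, star_trivial, submatrix_apply]
    rw [sum_castLE h _ (fun k hk => by simp [hy, Nat.not_lt.mpr hk])]
    refine Finset.sum_congr rfl fun k _ => ?_
    have hyk : y (Fin.castLE h k) = x k := by simp [hy, k.isLt]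
    rw [hyk]
    congr 1
    rw [sum_castLE h _ (fun l hl => by simp [hy, Nat.not_lt.mpr hl])]
    refine Finset.sum_congr rfl fun l _ => ?_
    have : y (Fin.castLE h l) = x l := by simp [hy, l.isLt]
    rw [this]
  rw [heq] at key
  exact key

lemma det_sub_pos {m p : ℕ} (h : p ≤ m) {B : Matrix (Fin m) (Fin m) ℝ}
    (hB : B.BlockTriangular id) (hBdiag : ∀ i, 0 < B i i) :
    0 < (B.submatrix (Fin.castLE h) (Fin.castLE h)).det := by
  have htri : (B.submatrix (Fin.castLE h) (Fin.castLE h)).BlockTriangular id := by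
    intro i j hij
    have hij' : (j : ℕ) < (i : ℕ) := hij
    exact hB hij'
  rw [Matrix.det_of_upperTriangular htri]
  exact Finset.prod_pos fun i _ => hBdiag _

/-- `q_κ(BᵀAB) = q_κ(C) q_κ(A)` for `C = BᵀB`, `B` invertible upper
triangular with positive diagonal. -/
theorem qpow_conj {m : ℕ} (κ : Fin m → ℝ)
    (A B : Matrix (Fin m) (Fin m) ℝ)
    (hA : A.PosDef) (hB : B.BlockTriangular id) (hBdiag : ∀ i, 0 < B i i)
    (hBinv : IsUnit B.det) :
    qpow κ (Bᵀ * A * B) = qpow κ (Bᵀ * B) * qpow κ A := by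
  unfold qpow
  rw [← Finset.prod_mul_distrib]
  refine Finset.prod_congr rfl fun i _ => ?_
  have h : (i : ℕ) + 1 ≤ m := i.isLt
  have hdB : 0 < (B.submatrix (Fin.castLE h) (Fin.castLE h)).det := det_sub_pos h hB hBdiag
  have hdA : 0 < (A.submatrix (Fin.castLE h) (Fin.castLE h)).det := (posdef_sub h hA).det_pos
  have h1 : leadDet (Bᵀ * A * B) ((i : ℕ) + 1) i.isLt
      = ((B.submatrix (Fin.castLE h) (Fin.castLE h)).det ^ 2 *
          (A.submatrix (Fin.castLE h) (Fin.castLE h)).det) := by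
    unfold leadDet
    rw [show (fun j : Fin ((i : ℕ) + 1) => Fin.castLE i.isLt j) = Fin.castLE h from rfl,
      submatrix_conj h A B hB, Matrix.det_mul, Matrix.det_mul, Matrix.det_transpose]
    ring
  have h2 : leadDet (Bᵀ * B) ((i : ℕ) + 1) i.isLt
      = (B.submatrix (Fin.castLE h) (Fin.castLE h)).det ^ 2 := by
    unfold leadDet
    have hBB : Bᵀ * B = Bᵀ * 1 * B := by rw [mul_one]
    rw [show (fun j : Fin ((i : ℕ) + 1) => Fin.castLE i.isLt j) = Fin.castLE h from rfl,
      hBB, submatrix_conj h 1 B hB, Matrix.submatrix_one _ (Fin.castLE_injective h),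
      mul_one, Matrix.det_mul, Matrix.det_transpose]
    ring
  have h3 : leadDet A ((i : ℕ) + 1) i.isLt = (A.submatrix (Fin.castLE h) (Fin.castLE h)).det := by
    unfold leadDet
    rfl
  rw [h1, h2, h3, Real.mul_rpow (by positivity) hdA.le]

end
end

section
/- Let B have the c-beta-Riesz type I density proportional to |B|^{(n−m+1)/2−1}|I_m − B|^{(ν−m+1)/2−1} q_κ(I_m − B) q_τ(B) on 0 < B < I_m, and let Θ = u(Θ)^T u(Θ) be the Cholesky decomposition of a positive definite m×m matrix Θ. Then C = u(Θ)^T B u(Θ) has density equal to B_m[ν/2,κ; n/2,τ]^{−1}·|Θ|^{−((ν+n−m+1)/2−1)}·q_{κ+τ}(Θ)^{−1}·|C|^{(n−m+1)/2−1}·|Θ − C|^{(ν−m+1)/2−1}·q_κ(Θ − C)·q_τ(C) on the set where C and Θ − C are positive definite. -/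
open MeasureTheory ProbabilityTheory Matrix BigOperators Real

noncomputable section

/-- Index set of the independent entries of a symmetric `m × m` matrix. -/
abbrev SymIdx (m : ℕ) := {p : Fin m × Fin m // p.1 ≤ p.2}

/-- Symmetric matrix built from its independent (upper triangular) entries. -/
def symOf {m : ℕ} (x : SymIdx m → ℝ) : Matrix (Fin m) (Fin m) ℝ :=
  Matrix.of fun i j => if h : i ≤ j then x ⟨(i, j), h⟩ else x ⟨(j, i), le_of_not_ge h⟩

/-- Generalized gamma function of weight κ (closed form). -/
def Gm (m : ℕ) (a : ℝ) (κ : Fin m → ℝ) : ℝ :=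
  π ^ ((m : ℝ) * ((m : ℝ) - 1) / 4) *
    ∏ i : Fin m, Real.Gamma (a + κ i - ((i : ℕ) : ℝ) / 2)

/-- Generalized c-beta function `B_m[a,κ;b,τ]`. -/
def Bm (m : ℕ) (a : ℝ) (κ : Fin m → ℝ) (b : ℝ) (τ : Fin m → ℝ) : ℝ :=
  Gm m a κ * Gm m b τ / Gm m (a + b) (κ + τ)

/-- Riesz type I density (β = 1, identity scale) with parameters `(a, κ)`. -/
def rieszDens (m : ℕ) (a : ℝ) (κ : Fin m → ℝ) (x : SymIdx m → ℝ) : ℝ :=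
  Set.indicator {x : SymIdx m → ℝ | (symOf x).PosDef}
    (fun x => Real.exp (-(symOf x).trace) * (symOf x).det ^ (a - ((m : ℝ) + 1) / 2) *
      qpow κ (symOf x) / Gm m a κ) x

/-- Kotz-Riesz type I density (β = 1, identity parameters) with weight τ. -/
def kotzRieszDens (n m : ℕ) (τ : Fin m → ℝ) (f : Fin n → Fin m → ℝ) : ℝ :=
  Gm m ((n : ℝ) / 2) (fun _ => 0) /
      (π ^ ((m : ℝ) * (n : ℝ) / 2) * Gm m ((n : ℝ) / 2) τ) *
    Real.exp (-((Matrix.of f)ᵀ * Matrix.of f).trace) *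
    qpow τ ((Matrix.of f)ᵀ * Matrix.of f)

/-- Matricvariate Pearson type II-Riesz type I density. -/
def pearsonDens (n m : ℕ) (ν : ℝ) (κ τ : Fin m → ℝ) (f : Fin n → Fin m → ℝ) : ℝ :=
  Set.indicator {f : Fin n → Fin m → ℝ | (1 - (Matrix.of f)ᵀ * Matrix.of f).PosDef}
    (fun f =>
      Gm m ((n : ℝ) / 2) (fun _ => 0) /
          (π ^ ((m : ℝ) * (n : ℝ) / 2) * Bm m (ν / 2) κ ((n : ℝ) / 2) τ) *
        (1 - (Matrix.of f)ᵀ * Matrix.of f).det ^ ((ν - (m : ℝ) + 1) / 2 - 1) *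
        qpow κ (1 - (Matrix.of f)ᵀ * Matrix.of f) *
        qpow τ ((Matrix.of f)ᵀ * Matrix.of f)) f

/-- Matricvariate c-beta-Riesz type I density. -/
def cbetaDens (m : ℕ) (ν n : ℝ) (κ τ : Fin m → ℝ) (x : SymIdx m → ℝ) : ℝ :=
  Set.indicator {x : SymIdx m → ℝ | (symOf x).PosDef ∧ (1 - symOf x).PosDef}
    (fun x =>
      (symOf x).det ^ ((n - (m : ℝ) + 1) / 2 - 1) *
        (1 - symOf x).det ^ ((ν - (m : ℝ) + 1) / 2 - 1) *
        qpow κ (1 - symOf x) * qpow τ (symOf x) / Bm m (ν / 2) κ (n / 2) τ) x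

namespace CBR
variable {m : ℕ}

/-- entries of a matrix packed into upper-triangular coordinates -/
def pack (A : Matrix (Fin m) (Fin m) ℝ) : SymIdx m → ℝ := fun p => A p.1.1 p.1.2

lemma symOf_apply (x : SymIdx m → ℝ) (i j : Fin m) :
    symOf x i j = if h : i ≤ j then x ⟨(i, j), h⟩ else x ⟨(j, i), le_of_not_ge h⟩ := rfl

lemma symOf_symm (x : SymIdx m → ℝ) : (symOf x)ᵀ = symOf x := by
  ext i j
  simp only [Matrix.transpose_apply, symOf_apply]
  rcases le_or_gt i j with h | h
  · rcases eq_or_lt_of_le h with rfl | h'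
    · simp
    · rw [dif_neg (not_le.2 h'), dif_pos h]
  · rw [dif_pos h.le, dif_neg (not_le.2 h)]

lemma symOf_pack {A : Matrix (Fin m) (Fin m) ℝ} (hA : Aᵀ = A) : symOf (pack A) = A := by
  ext i j
  simp only [symOf_apply, pack]
  split
  · rfl
  · exact (congrFun (congrFun hA j) i).symm

lemma pack_symOf (x : SymIdx m → ℝ) : pack (symOf x) = x := by
  funext p
  simp only [pack, symOf_apply, dif_pos p.2]

lemma conj_transpose_eq {w A : Matrix (Fin m) (Fin m) ℝ} (hA : Aᵀ = A) :
    (wᵀ * A * w)ᵀ = wᵀ * A * w := by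
  rw [Matrix.transpose_mul, Matrix.transpose_mul, Matrix.transpose_transpose, hA, mul_assoc]

lemma symOf_pack_conj (w : Matrix (Fin m) (Fin m) ℝ) (x : SymIdx m → ℝ) :
    symOf (pack (wᵀ * symOf x * w)) = wᵀ * symOf x * w :=
  symOf_pack (conj_transpose_eq (symOf_symm x))

/-- the key sum-reindexing lemma -/
lemma sum_pairs_symm (A : Matrix (Fin m) (Fin m) ℝ)
    (hA : ∀ k l, A k l = A l k) (c : Fin m → Fin m → ℝ) :
    ∑ k : Fin m, ∑ l : Fin m, c k l * A k l =
      ∑ q : SymIdx m,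
        (c q.1.1 q.1.2 + if q.1.1 = q.1.2 then 0 else c q.1.2 q.1.1) * A q.1.1 q.1.2 := by
  classical
  rw [show (∑ k : Fin m, ∑ l : Fin m, c k l * A k l)
      = ∑ p : Fin m × Fin m, c p.1 p.2 * A p.1 p.2 from
    (Fintype.sum_prod_type (f := fun p : Fin m × Fin m => c p.1 p.2 * A p.1 p.2)).symm]
  rw [← Finset.sum_filter_add_sum_filter_not Finset.univ (fun p : Fin m × Fin m => p.1 ≤ p.2)]
  have hswap : ∑ p ∈ Finset.univ.filter (fun p : Fin m × Fin m => ¬ p.1 ≤ p.2),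
      c p.1 p.2 * A p.1 p.2
      = ∑ p ∈ Finset.univ.filter (fun p : Fin m × Fin m => p.1 < p.2),
        c p.2 p.1 * A p.1 p.2 := by
    refine Finset.sum_nbij' (fun p => Prod.swap p) (fun p => Prod.swap p) ?_ ?_ ?_ ?_ ?_
    · intro p hp
      simp only [Finset.mem_filter, Finset.mem_univ, true_and, not_le] at hp ⊢
      exact hp
    · intro p hp
      simp only [Finset.mem_filter, Finset.mem_univ, true_and, not_le] at hp ⊢
      exact hp
    · intro p _; exact Prod.swap_swap p
    · intro p _; exact Prod.swap_swap p
    · intro p _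
      simp only [Prod.fst_swap, Prod.snd_swap]
      rw [hA p.1 p.2]
  rw [hswap]
  have hsub : ∑ q : SymIdx m,
      (c q.1.1 q.1.2 + if q.1.1 = q.1.2 then 0 else c q.1.2 q.1.1) * A q.1.1 q.1.2
      = ∑ p ∈ Finset.univ.filter (fun p : Fin m × Fin m => p.1 ≤ p.2),
        (c p.1 p.2 + if p.1 = p.2 then 0 else c p.2 p.1) * A p.1 p.2 := by
    rw [← Finset.sum_subtype (Finset.univ.filter (fun p : Fin m × Fin m => p.1 ≤ p.2))
      (fun p => by simp) (fun p : Fin m × Fin m =>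
        (c p.1 p.2 + if p.1 = p.2 then 0 else c p.2 p.1) * A p.1 p.2)]
  rw [hsub]
  have hsplit : ∀ p : Fin m × Fin m,
      (c p.1 p.2 + if p.1 = p.2 then 0 else c p.2 p.1) * A p.1 p.2
      = c p.1 p.2 * A p.1 p.2 + (if p.1 = p.2 then 0 else c p.2 p.1 * A p.1 p.2) := by
    intro p; split <;> ring
  rw [Finset.sum_congr rfl (fun p _ => hsplit p), Finset.sum_add_distrib]
  congr 1
  have hfil : Finset.univ.filter (fun p : Fin m × Fin m => p.1 < p.2)
      = (Finset.univ.filter (fun p : Fin m × Fin m => p.1 ≤ p.2)).filter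
          (fun p => ¬ p.1 = p.2) := by
    rw [Finset.filter_filter]
    apply Finset.filter_congr
    intro p _
    simp [lt_iff_le_and_ne]
  rw [hfil, Finset.sum_filter]
  apply Finset.sum_congr rfl
  intro p _
  by_cases h : p.1 = p.2 <;> simp [h]

/-- matrix of the congruence map in packed coordinates -/
def Mmat (w : Matrix (Fin m) (Fin m) ℝ) : Matrix (SymIdx m) (SymIdx m) ℝ :=
  Matrix.of fun p q =>
    w q.1.1 p.1.1 * w q.1.2 p.1.2 +
      if q.1.1 = q.1.2 then 0 else w q.1.2 p.1.1 * w q.1.1 p.1.2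

lemma conj_entry (w : Matrix (Fin m) (Fin m) ℝ) (x : SymIdx m → ℝ) (i j : Fin m) :
    (wᵀ * symOf x * w) i j =
      ∑ q : SymIdx m,
        (w q.1.1 i * w q.1.2 j + if q.1.1 = q.1.2 then 0 else w q.1.2 i * w q.1.1 j) * x q := by
  classical
  have hL : (wᵀ * symOf x * w) i j
      = ∑ k : Fin m, ∑ l : Fin m, (w k i * w l j) * symOf x k l := by
    rw [Matrix.mul_apply]
    simp only [Matrix.mul_apply, Matrix.transpose_apply, Finset.sum_mul]
    rw [Finset.sum_comm]
    apply Finset.sum_congr rfl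
    intro k _
    apply Finset.sum_congr rfl
    intro l _
    ring
  rw [hL, sum_pairs_symm (symOf x)
    (fun k l => by
      have := congrFun (congrFun (symOf_symm x) k) l
      exact this.symm)
    (fun k l => w k i * w l j)]
  apply Finset.sum_congr rfl
  intro q _
  have : symOf x q.1.1 q.1.2 = x q := by
    rw [symOf_apply, dif_pos q.2]
  rw [this]

lemma mulVec_Mmat (w : Matrix (Fin m) (Fin m) ℝ) (x : SymIdx m → ℝ) :
    Mmat w *ᵥ x = pack (wᵀ * symOf x * w) := by
  funext p
  rw [Matrix.mulVec, pack, conj_entry w x p.1.1 p.1.2]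
  rfl

/-- ordering index -/
def bIdx : SymIdx m → ℕ := fun p => (p.1.2 : ℕ) * m + (p.1.1 : ℕ)

lemma bIdx_inj : Function.Injective (bIdx (m := m)) := by
  intro p q h
  unfold bIdx at h
  have hp1 := p.1.1.isLt
  have hq1 := q.1.1.isLt
  have h1 : (p.1.1 : ℕ) = (q.1.1 : ℕ) := by
    have := congrArg (fun t => t % m) h
    simpa [Nat.mul_add_mod, Nat.add_mul_mod_self_left, Nat.mod_eq_of_lt hp1,
      Nat.mod_eq_of_lt hq1, Nat.mul_comm] using this
  have h2 : (p.1.2 : ℕ) = (q.1.2 : ℕ) := by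
    have hm : 0 < m := lt_of_le_of_lt (Nat.zero_le _) hp1
    have := congrArg (fun t => t / m) h
    simpa [Nat.mul_add_div hm, Nat.div_eq_of_lt hp1, Nat.div_eq_of_lt hq1,
      Nat.mul_comm, Nat.mul_div_cancel_left] using this
  apply Subtype.ext
  apply Prod.ext <;> exact Fin.ext ‹_›

lemma bIdx_le {k i l j : Fin m} (h1 : k ≤ i) (h2 : l ≤ j) :
    (l : ℕ) * m + (k : ℕ) ≤ (j : ℕ) * m + (i : ℕ) := by
  rcases lt_or_eq_of_le (show (l:ℕ) ≤ (j:ℕ) from h2) with h | h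
  · have hk := k.isLt
    have hjm : (l:ℕ) * m + m ≤ (j:ℕ) * m := by
      have := Nat.mul_le_mul_right m (Nat.succ_le_of_lt h)
      simpa [Nat.succ_mul] using this
    omega
  · rw [h]; exact Nat.add_le_add_left h1 _

lemma Mmat_triangular {w : Matrix (Fin m) (Fin m) ℝ} (hw : w.BlockTriangular id)
    {p q : SymIdx m} (h : bIdx p < bIdx q) : Mmat w p q = 0 := by
  have hpq := p.2
  have hq2 := q.2
  unfold Mmat
  simp only [Matrix.of_apply]
  have hterm1 : w q.1.1 p.1.1 * w q.1.2 p.1.2 = 0 := by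
    by_cases h1 : q.1.1 ≤ p.1.1
    · by_cases h2 : q.1.2 ≤ p.1.2
      · exact absurd (bIdx_le h1 h2) (not_le.2 h)
      · rw [hw (show id p.1.2 < id q.1.2 from not_le.1 h2), mul_zero]
    · rw [hw (show id p.1.1 < id q.1.1 from not_le.1 h1), zero_mul]
  rw [hterm1, zero_add]
  by_cases hd : q.1.1 = q.1.2
  · rw [if_pos hd]
  · rw [if_neg hd]
    by_cases h1 : q.1.2 ≤ p.1.1
    · by_cases h2 : q.1.1 ≤ p.1.2
      · refine absurd (bIdx_le (k := q.1.1) (i := p.1.1) (l := q.1.2) (j := p.1.2)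
          (le_trans hq2 h1) (le_trans h1 hpq)) (not_le.2 h)
      · rw [hw (show id p.1.2 < id q.1.1 from not_le.1 h2), mul_zero]
    · rw [hw (show id p.1.1 < id q.1.2 from not_le.1 h1), zero_mul]

/-- determinant of a block-triangular matrix with injective weights -/
lemma det_triangular_inj {ι : Type*} [Fintype ι] [DecidableEq ι]
    (M : Matrix ι ι ℝ) (b : ι → ℕ) (hb : Function.Injective b)
    (h : ∀ p q, b p < b q → M p q = 0) : M.det = ∏ p : ι, M p p := by
  have hBT : Mᵀ.BlockTriangular b := fun p q hlt => h q p hlt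
  rw [← Matrix.det_transpose]
  rw [hBT.det]
  rw [Finset.prod_image (fun a _ c _ h => hb h)]
  apply Finset.prod_congr rfl
  intro a _
  haveI : Subsingleton {x // b x = b a} :=
    ⟨fun x y => Subtype.ext (hb (x.2.trans y.2.symm))⟩
  rw [Matrix.det_eq_elem_of_subsingleton _ ⟨a, rfl⟩]
  rfl

lemma prod_symIdx (f : Fin m → ℝ) (hf : ∀ i, 0 < f i) :
    ∏ p : SymIdx m, f p.1.1 * f p.1.2 = (∏ i, f i) ^ (m + 1) := by
  classical
  set t := ∏ i, f i with ht
  have htpos : 0 < t := Finset.prod_pos (fun i _ => hf i)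
  set P := ∏ p ∈ Finset.univ.filter (fun p : Fin m × Fin m => p.1 ≤ p.2), f p.1 * f p.2 with hPdef
  have hsub : ∏ p : SymIdx m, f p.1.1 * f p.1.2 = P := by
    rw [hPdef, ← Finset.prod_subtype (Finset.univ.filter (fun p : Fin m × Fin m => p.1 ≤ p.2))
      (fun p => by simp) (fun p : Fin m × Fin m => f p.1 * f p.2)]
  rw [hsub]
  set Q := ∏ p ∈ Finset.univ.filter (fun p : Fin m × Fin m => ¬ p.1 ≤ p.2), f p.1 * f p.2 with hQdef
  set P' := ∏ p ∈ Finset.univ.filter (fun p : Fin m × Fin m => p.1 < p.2), f p.1 * f p.2 with hP'def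
  set D := ∏ p ∈ Finset.univ.filter (fun p : Fin m × Fin m => p.1 = p.2), f p.1 * f p.2 with hDdef
  have hPQ : P * Q = t ^ m * t ^ m := by
    rw [hPdef, hQdef, Finset.prod_filter_mul_prod_filter_not]
    rw [show (∏ p : Fin m × Fin m, f p.1 * f p.2)
        = (∏ p : Fin m × Fin m, f p.1) * (∏ p : Fin m × Fin m, f p.2) from
      Finset.prod_mul_distrib]
    rw [show (∏ p : Fin m × Fin m, f p.1) = t ^ m from by
      rw [Fintype.prod_prod_type (f := fun p : Fin m × Fin m => f p.1)]
      simp only [Finset.prod_const, Finset.card_univ, Fintype.card_fin]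
      rw [Finset.prod_pow]]
    rw [show (∏ p : Fin m × Fin m, f p.2) = t ^ m from by
      rw [Fintype.prod_prod_type (f := fun p : Fin m × Fin m => f p.2)]
      simp only [← ht, Finset.prod_const, Finset.card_univ, Fintype.card_fin]]
  have hQ : Q = P' := by
    rw [hQdef, hP'def]
    refine Finset.prod_nbij' (fun p => Prod.swap p) (fun p => Prod.swap p) ?_ ?_ ?_ ?_ ?_
    · intro p hp
      have h2 := (Finset.mem_filter.1 hp).2
      exact Finset.mem_filter.2 ⟨Finset.mem_univ _, not_le.1 h2⟩
    · intro p hp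
      have h2 := (Finset.mem_filter.1 hp).2
      exact Finset.mem_filter.2 ⟨Finset.mem_univ _, not_le.2 h2⟩
    · intro p _; exact Prod.swap_swap p
    · intro p _; exact Prod.swap_swap p
    · intro p _; exact mul_comm _ _
  have hD : D = t ^ 2 := by
    rw [hDdef]
    rw [show (Finset.univ.filter (fun p : Fin m × Fin m => p.1 = p.2))
        = Finset.univ.image (fun i : Fin m => (i, i)) from by
      ext p
      simp only [Finset.mem_filter, Finset.mem_univ, true_and, Finset.mem_image]
      constructor
      · intro h
        exact ⟨p.1, Prod.ext rfl h⟩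
      · rintro ⟨i, _, rfl⟩; rfl]
    rw [Finset.prod_image (fun a _ c _ h => (Prod.ext_iff.1 h).1)]
    rw [sq, ← Finset.prod_mul_distrib]
  have hP : P = P' * D := by
    rw [hPdef, ← Finset.prod_filter_mul_prod_filter_not
      (Finset.univ.filter (fun p : Fin m × Fin m => p.1 ≤ p.2)) (fun p => p.1 = p.2),
      mul_comm, hP'def, hDdef]
    congr 1
    · congr 1
      rw [Finset.filter_filter]
      apply Finset.filter_congr
      intro p _
      simp [lt_iff_le_and_ne]
    · congr 1
      rw [Finset.filter_filter]
      apply Finset.filter_congr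
      intro p _
      exact ⟨fun h => h.2, fun h => ⟨le_of_eq h, h⟩⟩
  have hPpos : 0 < P := Finset.prod_pos (fun p _ => mul_pos (hf _) (hf _))
  have hsq : P ^ 2 = (t ^ (m + 1)) ^ 2 := by
    have hthis : P' * D * P' = t ^ m * t ^ m := by rw [← hP, ← hQ] at *; rw [← hPQ, hP, hQ]
    calc P ^ 2 = ((P' * D) * P') * D := by rw [hP]; ring
    _ = (t ^ m * t ^ m) * D := by rw [hthis]
    _ = (t ^ m * t ^ m) * t ^ 2 := by rw [hD]
    _ = (t ^ (m + 1)) ^ 2 := by ring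
  have hTpos : 0 < t ^ (m + 1) := pow_pos htpos _
  have hfac : (P - t ^ (m + 1)) * (P + t ^ (m + 1)) = 0 := by
    have : P ^ 2 - (t ^ (m + 1)) ^ 2 = 0 := by rw [hsq]; ring
    calc (P - t ^ (m + 1)) * (P + t ^ (m + 1)) = P ^ 2 - (t ^ (m + 1)) ^ 2 := by ring
    _ = 0 := this
  rcases mul_eq_zero.1 hfac with h | h
  · linarith
  · linarith

lemma det_Mmat {w : Matrix (Fin m) (Fin m) ℝ} (hw : w.BlockTriangular id) :
    (Mmat w).det = ∏ p : SymIdx m, w p.1.1 p.1.1 * w p.1.2 p.1.2 := by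
  rw [det_triangular_inj (Mmat w) bIdx bIdx_inj (fun p q h => Mmat_triangular hw h)]
  apply Finset.prod_congr rfl
  intro p _
  show Mmat w p p = _
  unfold Mmat
  simp only [Matrix.of_apply]
  rcases eq_or_lt_of_le p.2 with h | h
  · rw [if_pos h, add_zero]
  · rw [if_neg (ne_of_lt h), hw (show id p.1.1 < id p.1.2 from h), zero_mul, add_zero]

lemma det_Mmat_tri {w : Matrix (Fin m) (Fin m) ℝ} (hw : w.BlockTriangular id)
    (hd : ∀ i, 0 < w i i) :
    (Mmat w).det = (∏ i, w i i) ^ (m + 1) := by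
  rw [det_Mmat hw, prod_symIdx (fun i => w i i) hd]

/-- sum over `Fin m` of a function vanishing off the first `p` indices -/
lemma sum_castLE {p : ℕ} (h : p ≤ m) (g : Fin m → ℝ)
    (hg : ∀ k : Fin m, p ≤ (k : ℕ) → g k = 0) :
    ∑ k : Fin m, g k = ∑ k : Fin p, g (Fin.castLE h k) := by
  classical
  have : ∑ k : Fin p, g (Fin.castLE h k) = ∑ k ∈ Finset.univ.map (Fin.castLEEmb h), g k := by
    rw [Finset.sum_map Finset.univ (Fin.castLEEmb h) g]
    rfl
  rw [this]
  symm
  apply Finset.sum_subset (Finset.subset_univ _)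
  intro k _ hk
  apply hg
  by_contra hlt
  push_neg at hlt
  exact hk (Finset.mem_map.2 ⟨⟨(k : ℕ), hlt⟩, Finset.mem_univ _, rfl⟩)

lemma submatrix_mul_tri {p : ℕ} (h : p ≤ m) (A w : Matrix (Fin m) (Fin m) ℝ)
    (hw : w.BlockTriangular id) :
    (A * w).submatrix (Fin.castLE h) (Fin.castLE h) =
      A.submatrix (Fin.castLE h) (Fin.castLE h) * w.submatrix (Fin.castLE h) (Fin.castLE h) := by
  ext i j
  simp only [Matrix.submatrix_apply, Matrix.mul_apply]
  rw [sum_castLE h _ (fun k hk => ?_)]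
  · have hjk : ((Fin.castLE h j : Fin m) : ℕ) < (k : ℕ) := lt_of_lt_of_le j.isLt hk
    rw [hw (show id (Fin.castLE h j) < id k from hjk), mul_zero]

lemma tri_transpose_mul_submatrix {p : ℕ} (h : p ≤ m) (A w : Matrix (Fin m) (Fin m) ℝ)
    (hw : w.BlockTriangular id) :
    (wᵀ * A).submatrix (Fin.castLE h) (Fin.castLE h) =
      (w.submatrix (Fin.castLE h) (Fin.castLE h))ᵀ *
        A.submatrix (Fin.castLE h) (Fin.castLE h) := by
  ext i j
  simp only [Matrix.submatrix_apply, Matrix.mul_apply, Matrix.transpose_apply]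
  rw [sum_castLE h _ (fun k hk => ?_)]
  · have hik : ((Fin.castLE h i : Fin m) : ℕ) < (k : ℕ) := lt_of_lt_of_le i.isLt hk
    rw [hw (show id (Fin.castLE h i) < id k from hik), zero_mul]

lemma submatrix_one_castLE {p : ℕ} (h : p ≤ m) :
    (1 : Matrix (Fin m) (Fin m) ℝ).submatrix (Fin.castLE h) (Fin.castLE h) = 1 := by
  ext i j
  simp only [Matrix.submatrix_apply, Matrix.one_apply, Fin.castLE_inj]

lemma leadDet_conj {w : Matrix (Fin m) (Fin m) ℝ} (hw : w.BlockTriangular id)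
    (A : Matrix (Fin m) (Fin m) ℝ) {p : ℕ} (h : p ≤ m) :
    leadDet (wᵀ * A * w) p h =
      (w.submatrix (Fin.castLE h) (Fin.castLE h)).det ^ 2 * leadDet A p h := by
  unfold leadDet
  rw [submatrix_mul_tri h (wᵀ * A) w hw, tri_transpose_mul_submatrix h A w hw,
    Matrix.det_mul, Matrix.det_mul, Matrix.det_transpose]
  ring

lemma leadDet_gram {w : Matrix (Fin m) (Fin m) ℝ} (hw : w.BlockTriangular id)
    {p : ℕ} (h : p ≤ m) :
    leadDet (wᵀ * w) p h = (w.submatrix (Fin.castLE h) (Fin.castLE h)).det ^ 2 := by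
  have := leadDet_conj hw 1 h
  rw [Matrix.mul_one] at this
  rw [this]
  unfold leadDet
  rw [submatrix_one_castLE, Matrix.det_one, mul_one]

lemma submatrix_blockTriangular {w : Matrix (Fin m) (Fin m) ℝ} (hw : w.BlockTriangular id)
    {p : ℕ} (h : p ≤ m) :
    (w.submatrix (Fin.castLE h) (Fin.castLE h)).BlockTriangular id := by
  intro i j hij
  exact hw (show id (Fin.castLE h j) < id (Fin.castLE h i) from hij)

lemma det_submatrix_tri_pos {w : Matrix (Fin m) (Fin m) ℝ} (hw : w.BlockTriangular id)
    (hd : ∀ i, 0 < w i i) {p : ℕ} (h : p ≤ m) :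
    0 < (w.submatrix (Fin.castLE h) (Fin.castLE h)).det := by
  rw [Matrix.det_of_upperTriangular (submatrix_blockTriangular hw h)]
  exact Finset.prod_pos (fun i _ => hd _)

lemma posDef_conj {w C : Matrix (Fin m) (Fin m) ℝ} (hC : C.PosDef)
    (hw : w.det ≠ 0) : (wᵀ * C * w).PosDef := by
  rw [Matrix.posDef_iff_dotProduct_mulVec]
  constructor
  · show (wᵀ * C * w)ᴴ = wᵀ * C * w
    have hsym : Cᵀ = C := by
      have := hC.isHermitian
      rwa [Matrix.IsHermitian, Matrix.conjTranspose_eq_transpose_of_trivial] at this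
    rw [Matrix.conjTranspose_eq_transpose_of_trivial]
    exact conj_transpose_eq hsym
  · intro x hx
    have hwx : w *ᵥ x ≠ 0 := by
      intro hzero
      apply hx
      have : Function.Injective (w.mulVec) := by
        rw [Matrix.mulVec_injective_iff_isUnit]
        exact Matrix.isUnit_iff_isUnit_det _ |>.2 (Ne.isUnit hw)
      exact this (by rw [hzero, Matrix.mulVec_zero])
    have key : star x ⬝ᵥ (wᵀ * C * w) *ᵥ x = star (w *ᵥ x) ⬝ᵥ C *ᵥ (w *ᵥ x) := by
      rw [star_trivial, star_trivial, ← Matrix.mulVec_mulVec, ← Matrix.mulVec_mulVec,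
        Matrix.dotProduct_mulVec x wᵀ, Matrix.vecMul_transpose]
    rw [key]
    exact hC.dotProduct_mulVec_pos hwx

lemma posDef_submatrix_castLE {A : Matrix (Fin m) (Fin m) ℝ} (hA : A.PosDef)
    {p : ℕ} (h : p ≤ m) :
    (A.submatrix (Fin.castLE h) (Fin.castLE h)).PosDef := by
  have hsym : Aᵀ = A := by
    have := hA.isHermitian
    rwa [Matrix.IsHermitian, Matrix.conjTranspose_eq_transpose_of_trivial] at this
  rw [Matrix.posDef_iff_dotProduct_mulVec]
  constructor
  · show (A.submatrix (Fin.castLE h) (Fin.castLE h))ᴴ = _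
    rw [Matrix.conjTranspose_eq_transpose_of_trivial]
    ext i j
    simp only [Matrix.transpose_apply, Matrix.submatrix_apply]
    exact congrFun (congrFun hsym _) _
  · intro x hx
    set x' : Fin m → ℝ := fun k => if hk : (k : ℕ) < p then x ⟨k, hk⟩ else 0 with hx'
    have hx'c : ∀ i : Fin p, x' (Fin.castLE h i) = x i := by
      intro i
      simp only [hx']
      rw [dif_pos (show ((Fin.castLE h i : Fin m) : ℕ) < p from i.isLt)]
      exact congrArg x (Fin.ext rfl)
    have hx'0 : ∀ k : Fin m, p ≤ (k : ℕ) → x' k = 0 := by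
      intro k hk
      simp only [hx']
      rw [dif_neg (not_lt.2 hk)]
    have hx'ne : x' ≠ 0 := by
      intro hzero
      apply hx
      funext i
      have := congrFun hzero (Fin.castLE h i)
      rwa [hx'c i] at this
    have key : star x ⬝ᵥ (A.submatrix (Fin.castLE h) (Fin.castLE h)) *ᵥ x
        = star x' ⬝ᵥ A *ᵥ x' := by
      rw [star_trivial, star_trivial]
      show ∑ i, x i * _ = ∑ i, x' i * _
      rw [sum_castLE h (fun i => x' i * (A *ᵥ x') i) (fun k hk => by simp only [hx'0 k hk, zero_mul])]
      apply Finset.sum_congr rfl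
      intro i _
      rw [hx'c i]
      congr 1
      show ∑ j, A.submatrix (Fin.castLE h) (Fin.castLE h) i j * x j
        = ∑ j, A (Fin.castLE h i) j * x' j
      rw [sum_castLE h (fun j => A (Fin.castLE h i) j * x' j)
        (fun k hk => by simp only [hx'0 k hk, mul_zero])]
      apply Finset.sum_congr rfl
      intro j _
      rw [hx'c j]
      rfl
    rw [key]
    exact hA.dotProduct_mulVec_pos hx'ne

lemma posDef_leadDet_pos {A : Matrix (Fin m) (Fin m) ℝ} (hA : A.PosDef)
    {p : ℕ} (h : p ≤ m) : 0 < leadDet A p h :=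
  (posDef_submatrix_castLE hA h).det_pos

section Theta
variable {u : Matrix (Fin m) (Fin m) ℝ} (hu : u.BlockTriangular id) (hud : ∀ i, 0 < u i i)

include hu hud

lemma det_u_pos : 0 < u.det := by
  rw [Matrix.det_of_upperTriangular hu]
  exact Finset.prod_pos (fun i _ => hud i)

lemma inv_mul_u : u⁻¹ * u = 1 :=
  Matrix.nonsing_inv_mul u (Ne.isUnit (ne_of_gt (det_u_pos hu hud)))

lemma mul_inv_u : u * u⁻¹ = 1 :=
  Matrix.mul_nonsing_inv u (Ne.isUnit (ne_of_gt (det_u_pos hu hud)))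

lemma inv_triangular : (u⁻¹).BlockTriangular id := by
  haveI := u.invertibleOfIsUnitDet (Ne.isUnit (ne_of_gt (det_u_pos hu hud)))
  exact Matrix.blockTriangular_inv_of_blockTriangular hu

lemma det_sub_inv_mul {p : ℕ} (h : p ≤ m) :
    ((u⁻¹).submatrix (Fin.castLE h) (Fin.castLE h)).det *
      (u.submatrix (Fin.castLE h) (Fin.castLE h)).det = 1 := by
  rw [← Matrix.det_mul, ← submatrix_mul_tri h (u⁻¹) u hu, inv_mul_u hu hud,
    submatrix_one_castLE, Matrix.det_one]

lemma leadDet_theta_pos {p : ℕ} (h : p ≤ m) : 0 < leadDet (uᵀ * u) p h := by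
  rw [leadDet_gram hu h]
  exact pow_pos (det_submatrix_tri_pos hu hud h) 2

lemma leadDet_inv_conj (C : Matrix (Fin m) (Fin m) ℝ) {p : ℕ} (h : p ≤ m) :
    leadDet ((u⁻¹)ᵀ * C * u⁻¹) p h = leadDet C p h / leadDet (uᵀ * u) p h := by
  rw [leadDet_conj (inv_triangular hu hud) C h, leadDet_gram hu h]
  have h1 := det_sub_inv_mul hu hud h
  have h2 : (0:ℝ) < (u.submatrix (Fin.castLE h) (Fin.castLE h)).det :=
    det_submatrix_tri_pos hu hud h
  rw [eq_div_iff (pow_ne_zero 2 (ne_of_gt h2))]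
  calc ((u⁻¹).submatrix (Fin.castLE h) (Fin.castLE h)).det ^ 2 * leadDet C p h *
        (u.submatrix (Fin.castLE h) (Fin.castLE h)).det ^ 2
      = (((u⁻¹).submatrix (Fin.castLE h) (Fin.castLE h)).det *
          (u.submatrix (Fin.castLE h) (Fin.castLE h)).det) ^ 2 * leadDet C p h := by ring
  _ = leadDet C p h := by rw [h1]; ring

lemma qpow_inv_conj (κ : Fin m → ℝ) {C : Matrix (Fin m) (Fin m) ℝ}
    (hC : ∀ (p : ℕ) (h : p ≤ m), 0 < leadDet C p h) :
    qpow κ ((u⁻¹)ᵀ * C * u⁻¹) = qpow κ C / qpow κ (uᵀ * u) := by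
  unfold qpow
  rw [← Finset.prod_div_distrib]
  apply Finset.prod_congr rfl
  intro i _
  rw [leadDet_inv_conj hu hud C i.isLt,
    Real.div_rpow (le_of_lt (hC _ _)) (le_of_lt (leadDet_theta_pos hu hud _))]

lemma qpow_theta_pos (κ : Fin m → ℝ) : 0 < qpow κ (uᵀ * u) := by
  unfold qpow
  exact Finset.prod_pos (fun i _ => Real.rpow_pos_of_pos (leadDet_theta_pos hu hud _) _)

lemma qpow_theta_add (κ τ : Fin m → ℝ) :
    qpow (κ + τ) (uᵀ * u) = qpow κ (uᵀ * u) * qpow τ (uᵀ * u) := by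
  unfold qpow
  rw [← Finset.prod_mul_distrib]
  apply Finset.prod_congr rfl
  intro i _
  rw [← Real.rpow_add (leadDet_theta_pos hu hud _)]
  congr 1
  split
  · show κ _ + τ _ - (κ _ + τ _) = _
    ring
  · show κ _ + τ _ - 0 = _
    ring

end Theta

lemma qpow_pos_of_posDef {A : Matrix (Fin m) (Fin m) ℝ} (hA : A.PosDef) (κ : Fin m → ℝ) :
    0 < qpow κ A := by
  unfold qpow
  exact Finset.prod_pos (fun i _ => Real.rpow_pos_of_pos (posDef_leadDet_pos hA _) _)

lemma det_inv_conj (u : Matrix (Fin m) (Fin m) ℝ) (hvu : u⁻¹ * u = 1)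
    (C : Matrix (Fin m) (Fin m) ℝ) :
    ((u⁻¹)ᵀ * C * u⁻¹).det = C.det * ((uᵀ * u).det)⁻¹ := by
  have hdet : (u⁻¹).det * u.det = 1 := by
    rw [← Matrix.det_mul, hvu, Matrix.det_one]
  have hu0 : u.det ≠ 0 := by
    intro h0
    rw [h0, mul_zero] at hdet
    exact one_ne_zero hdet.symm
  rw [Matrix.det_mul, Matrix.det_mul, Matrix.det_transpose, Matrix.det_mul,
    Matrix.det_transpose]
  have hv : (u⁻¹).det = (u.det)⁻¹ := eq_inv_of_mul_eq_one_left hdet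
  rw [hv, mul_inv]
  ring

/-- congruence map on packed coordinates -/
def congFun (w : Matrix (Fin m) (Fin m) ℝ) : (SymIdx m → ℝ) → (SymIdx m → ℝ) :=
  fun x => pack (wᵀ * symOf x * w)

lemma symOf_congFun (w : Matrix (Fin m) (Fin m) ℝ) (x : SymIdx m → ℝ) :
    symOf (congFun w x) = wᵀ * symOf x * w := symOf_pack_conj w x

lemma congFun_congFun (w w' : Matrix (Fin m) (Fin m) ℝ) (x : SymIdx m → ℝ) :
    congFun w (congFun w' x) = congFun (w' * w) x := by
  unfold congFun
  rw [symOf_pack_conj, Matrix.transpose_mul]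
  show pack _ = pack _
  congr 1
  noncomm_ring


lemma congFun_one (x : SymIdx m → ℝ) : congFun (1 : Matrix (Fin m) (Fin m) ℝ) x = x := by
  unfold congFun
  rw [Matrix.transpose_one, Matrix.one_mul, Matrix.mul_one, pack_symOf]

lemma congFun_eq_toLin' (w : Matrix (Fin m) (Fin m) ℝ) :
    congFun w = ⇑(Matrix.toLin' (Mmat w)) := by
  funext x
  rw [Matrix.toLin'_apply, mulVec_Mmat]
  rfl

lemma congFun_measurable (w : Matrix (Fin m) (Fin m) ℝ) : Measurable (congFun w) := by
  rw [congFun_eq_toLin']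
  exact (LinearMap.continuous_on_pi _).measurable

/-- the congruence map as a measurable equivalence -/
def congEquiv (u : Matrix (Fin m) (Fin m) ℝ) (hvu : u⁻¹ * u = 1) (huv : u * u⁻¹ = 1) :
    (SymIdx m → ℝ) ≃ᵐ (SymIdx m → ℝ) where
  toFun := congFun u
  invFun := congFun u⁻¹
  left_inv := fun x => by rw [congFun_congFun, huv, congFun_one]
  right_inv := fun x => by rw [congFun_congFun, hvu, congFun_one]
  measurable_toFun := congFun_measurable u
  measurable_invFun := congFun_measurable u⁻¹

lemma map_withDensity_equiv {α β : Type*} [MeasurableSpace α] [MeasurableSpace β]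
    (e : α ≃ᵐ β) (μ : MeasureTheory.Measure α) (f : β → ENNReal) :
    (μ.withDensity (fun a => f (e a))).map e = (μ.map e).withDensity f := by
  ext s hs
  rw [MeasureTheory.Measure.map_apply e.measurable hs,
    MeasureTheory.withDensity_apply _ (e.measurable hs),
    MeasureTheory.withDensity_apply _ hs,
    MeasureTheory.Measure.restrict_map e.measurable hs,
    MeasureTheory.lintegral_map_equiv f e]

lemma withDensity_smul_measure' {α : Type*} [MeasurableSpace α]
    (μ : MeasureTheory.Measure α) (c : ENNReal) (hc : c ≠ ⊤) (f : α → ENNReal) :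
    (c • μ).withDensity f = μ.withDensity (fun x => c * f x) := by
  ext s hs
  rw [MeasureTheory.withDensity_apply _ hs, MeasureTheory.withDensity_apply _ hs,
    MeasureTheory.Measure.restrict_smul, MeasureTheory.lintegral_smul_measure,
    MeasureTheory.lintegral_const_mul' _ _ hc, smul_eq_mul]


section Density
variable {u : Matrix (Fin m) (Fin m) ℝ} (hu : u.BlockTriangular id) (hud : ∀ i, 0 < u i i)

include hu hud in
lemma density_pointwise (hΘ : (uᵀ * u).PosDef) (ν n : ℝ) (κ τ : Fin m → ℝ)
    (y : SymIdx m → ℝ) :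
    |(Mmat u).det|⁻¹ * cbetaDens m ν n κ τ (congFun u⁻¹ y) =
      Set.indicator
        {x : SymIdx m → ℝ | (symOf x).PosDef ∧ (uᵀ * u - symOf x).PosDef}
        (fun x =>
          (Bm m (ν / 2) κ (n / 2) τ)⁻¹ *
            (uᵀ * u).det ^ (-((ν + n - (m : ℝ) + 1) / 2 - 1)) *
            (qpow (κ + τ) (uᵀ * u))⁻¹ *
            (symOf x).det ^ ((n - (m : ℝ) + 1) / 2 - 1) *
            (uᵀ * u - symOf x).det ^ ((ν - (m : ℝ) + 1) / 2 - 1) *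
            qpow κ (uᵀ * u - symOf x) * qpow τ (symOf x)) y := by
  have hvu : u⁻¹ * u = 1 := inv_mul_u hu hud
  have huv : u * u⁻¹ = 1 := mul_inv_u hu hud
  have hvdet : (u⁻¹).det * u.det = 1 := by
    rw [← Matrix.det_mul, hvu, Matrix.det_one]
  have hudet : (0:ℝ) < u.det := det_u_pos hu hud
  have hv0 : (u⁻¹).det ≠ 0 := by
    intro h0
    rw [h0, zero_mul] at hvdet
    exact one_ne_zero hvdet.symm
  set C := symOf y with hC
  set Θ := uᵀ * u with hΘdef
  have hsym : symOf (congFun u⁻¹ y) = (u⁻¹)ᵀ * C * u⁻¹ := symOf_congFun u⁻¹ y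
  have hvt : (u⁻¹)ᵀ * Θ * u⁻¹ = 1 := by
    rw [hΘdef, show (u⁻¹)ᵀ * (uᵀ * u) * u⁻¹ = (u * u⁻¹)ᵀ * (u * u⁻¹) from by
      rw [Matrix.transpose_mul]; noncomm_ring, huv, Matrix.transpose_one, Matrix.one_mul]
  have hone : 1 - (u⁻¹)ᵀ * C * u⁻¹ = (u⁻¹)ᵀ * (Θ - C) * u⁻¹ := by
    rw [Matrix.mul_sub, Matrix.sub_mul, hvt]
  have hback : uᵀ * ((u⁻¹)ᵀ * C * u⁻¹) * u = C := by
    rw [show uᵀ * ((u⁻¹)ᵀ * C * u⁻¹) * u = (u⁻¹ * u)ᵀ * C * (u⁻¹ * u) from by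
      rw [Matrix.transpose_mul]; noncomm_ring, hvu, Matrix.transpose_one,
      Matrix.one_mul, Matrix.mul_one]
  have hmem : ((symOf (congFun u⁻¹ y)).PosDef ∧ (1 - symOf (congFun u⁻¹ y)).PosDef)
      ↔ (C.PosDef ∧ (Θ - C).PosDef) := by
    rw [hsym, hone]
    constructor
    · rintro ⟨h1, h2⟩
      refine ⟨?_, ?_⟩
      · have := posDef_conj h1 (ne_of_gt hudet)
        rwa [hback] at this
      · have := posDef_conj h2 (ne_of_gt hudet)
        have hback2 : uᵀ * ((u⁻¹)ᵀ * (Θ - C) * u⁻¹) * u = Θ - C := by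
          rw [show uᵀ * ((u⁻¹)ᵀ * (Θ - C) * u⁻¹) * u
              = (u⁻¹ * u)ᵀ * (Θ - C) * (u⁻¹ * u) from by
            rw [Matrix.transpose_mul]; noncomm_ring, hvu, Matrix.transpose_one,
            Matrix.one_mul, Matrix.mul_one]
        rwa [hback2] at this
    · rintro ⟨h1, h2⟩
      exact ⟨posDef_conj h1 hv0, posDef_conj h2 hv0⟩
  by_cases hy : C.PosDef ∧ (Θ - C).PosDef
  · rw [Set.indicator_of_mem (show y ∈ _ from hy)]
    unfold cbetaDens
    rw [Set.indicator_of_mem (show congFun u⁻¹ y ∈ _ from hmem.2 hy)]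
    -- now pure algebra
    set t := ∏ i, u i i with htdef
    have ht : (0:ℝ) < t := Finset.prod_pos (fun i _ => hud i)
    have habs : |(Mmat u).det| = t ^ (m + 1) := by
      rw [det_Mmat_tri hu hud]
      exact abs_of_pos (pow_pos ht _)
    have hdetu_t : u.det = t := Matrix.det_of_upperTriangular hu
    have hTt : Θ.det = t ^ 2 := by
      rw [hΘdef, Matrix.det_mul, Matrix.det_transpose, hdetu_t]
      ring
    have hT : (0:ℝ) < Θ.det := hΘ.det_pos
    have hdet1 : ((u⁻¹)ᵀ * C * u⁻¹).det = C.det * (Θ.det)⁻¹ := det_inv_conj u hvu C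
    have hdet2 : ((u⁻¹)ᵀ * (Θ - C) * u⁻¹).det = (Θ - C).det * (Θ.det)⁻¹ :=
      det_inv_conj u hvu (Θ - C)
    have hq1 : qpow κ ((u⁻¹)ᵀ * (Θ - C) * u⁻¹) = qpow κ (Θ - C) / qpow κ Θ :=
      qpow_inv_conj hu hud κ (fun p h => posDef_leadDet_pos hy.2 h)
    have hq2 : qpow τ ((u⁻¹)ᵀ * C * u⁻¹) = qpow τ C / qpow τ Θ :=
      qpow_inv_conj hu hud τ (fun p h => posDef_leadDet_pos hy.1 h)
    have hqΘ : qpow (κ + τ) Θ = qpow κ Θ * qpow τ Θ := qpow_theta_add hu hud κ τ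
    have hCd : (0:ℝ) < C.det := hy.1.det_pos
    have hTCd : (0:ℝ) < (Θ - C).det := hy.2.det_pos
    rw [hsym, hone, hdet1, hdet2, hq1, hq2, hqΘ]
    rw [Real.mul_rpow hCd.le (inv_nonneg.2 hT.le),
      Real.mul_rpow hTCd.le (inv_nonneg.2 hT.le),
      Real.inv_rpow hT.le, Real.inv_rpow hT.le,
      ← Real.rpow_neg hT.le, ← Real.rpow_neg hT.le]
    -- convert Θ.det powers to t powers
    have hTpow : ∀ e : ℝ, Θ.det ^ e = t ^ (2 * e) := by
      intro e
      rw [hTt, ← Real.rpow_natCast t 2, ← Real.rpow_mul ht.le]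
      norm_num
    have htinv : ((t:ℝ) ^ (m + 1))⁻¹ = t ^ (-((m:ℝ) + 1)) := by
      rw [← Real.rpow_natCast t (m + 1), ← Real.rpow_neg ht.le]
      push_cast
      ring_nf
    rw [habs, htinv, hTpow, hTpow, hTpow]
    have hcomb : t ^ (-((m:ℝ) + 1)) * (t ^ (2 * -((n - (m:ℝ) + 1) / 2 - 1)) *
        t ^ (2 * -((ν - (m:ℝ) + 1) / 2 - 1)))
        = t ^ (2 * -((ν + n - (m:ℝ) + 1) / 2 - 1)) := by
      rw [← Real.rpow_add ht, ← Real.rpow_add ht]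
      congr 1
      ring
    calc t ^ (-((m:ℝ) + 1)) *
        (C.det ^ ((n - (m:ℝ) + 1) / 2 - 1) * t ^ (2 * -((n - (m:ℝ) + 1) / 2 - 1)) *
          ((Θ - C).det ^ ((ν - (m:ℝ) + 1) / 2 - 1) * t ^ (2 * -((ν - (m:ℝ) + 1) / 2 - 1))) *
          (qpow κ (Θ - C) / qpow κ Θ) * (qpow τ C / qpow τ Θ) / Bm m (ν / 2) κ (n / 2) τ)
        = (t ^ (-((m:ℝ) + 1)) * (t ^ (2 * -((n - (m:ℝ) + 1) / 2 - 1)) *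
            t ^ (2 * -((ν - (m:ℝ) + 1) / 2 - 1)))) *
          (C.det ^ ((n - (m:ℝ) + 1) / 2 - 1) * (Θ - C).det ^ ((ν - (m:ℝ) + 1) / 2 - 1) *
            (qpow κ (Θ - C) * (qpow κ Θ)⁻¹) * (qpow τ C * (qpow τ Θ)⁻¹) *
            (Bm m (ν / 2) κ (n / 2) τ)⁻¹) := by
          rw [div_eq_mul_inv, div_eq_mul_inv, div_eq_mul_inv]
          ring
    _ = _ := by
          rw [hcomb, mul_inv]
          ring
  · rw [Set.indicator_of_notMem (show y ∉ _ from hy)]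
    unfold cbetaDens
    rw [Set.indicator_of_notMem (show congFun u⁻¹ y ∉ _ from fun hc => hy (hmem.1 hc))]
    rw [mul_zero]

end Density
end CBR

/-- if `B` has the c-beta-Riesz type I density and
`Θ = u(Θ)ᵀ u(Θ)` is positive definite with upper triangular Cholesky factor
`u(Θ)`, then `C = u(Θ)ᵀ B u(Θ)` has the stated (non-standardised) density. -/
theorem c_beta_riesz_scaled {Ω : Type*} [MeasurableSpace Ω]
    (μ : Measure Ω) [IsProbabilityMeasure μ]
    {m : ℕ} (hm : 0 < m) (ν n : ℝ) (κ τ : Fin m → ℝ)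
    (B : Ω → SymIdx m → ℝ) (hBm : Measurable B)
    (hBlaw : μ.map B =
      volume.withDensity fun x => ENNReal.ofReal (cbetaDens m ν n κ τ x))
    (u : Matrix (Fin m) (Fin m) ℝ) (hu : u.BlockTriangular id)
    (hud : ∀ i, 0 < u i i) (hΘ : (uᵀ * u).PosDef) :
    μ.map (fun ω (p : SymIdx m) => (uᵀ * symOf (B ω) * u) p.1.1 p.1.2) =
      (volume.withDensity fun x =>
        ENNReal.ofReal (Set.indicator
          {x : SymIdx m → ℝ | (symOf x).PosDef ∧ (uᵀ * u - symOf x).PosDef}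
          (fun x =>
            (Bm m (ν / 2) κ (n / 2) τ)⁻¹ *
              (uᵀ * u).det ^ (-((ν + n - (m : ℝ) + 1) / 2 - 1)) *
              (qpow (κ + τ) (uᵀ * u))⁻¹ *
              (symOf x).det ^ ((n - (m : ℝ) + 1) / 2 - 1) *
              (uᵀ * u - symOf x).det ^ ((ν - (m : ℝ) + 1) / 2 - 1) *
              qpow κ (uᵀ * u - symOf x) * qpow τ (symOf x)) x)) := by
  classical
  have hvu : u⁻¹ * u = 1 := CBR.inv_mul_u hu hud
  have huv : u * u⁻¹ = 1 := CBR.mul_inv_u hu hud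
  set e := CBR.congEquiv u hvu huv with he
  have hfun : (fun ω (p : SymIdx m) => (uᵀ * symOf (B ω) * u) p.1.1 p.1.2)
      = (⇑e) ∘ B := rfl
  have ht : (0:ℝ) < ∏ i, u i i := Finset.prod_pos (fun i _ => hud i)
  have hdet : (CBR.Mmat u).det ≠ 0 := by
    rw [CBR.det_Mmat_tri hu hud]
    exact ne_of_gt (pow_pos ht _)
  have hmapvol : MeasureTheory.Measure.map (⇑e) volume
      = ENNReal.ofReal |(CBR.Mmat u).det⁻¹| • volume := by
    have hcoe : ⇑e = ⇑(Matrix.toLin' (CBR.Mmat u)) := by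
      funext x
      show CBR.congFun u x = _
      rw [CBR.congFun_eq_toLin']
    rw [hcoe]
    exact Real.map_matrix_volume_pi_eq_smul_volume_pi hdet
  have hrew : (fun x => ENNReal.ofReal (cbetaDens m ν n κ τ x))
      = fun x => (fun y => ENNReal.ofReal (cbetaDens m ν n κ τ (e.symm y))) (e x) := by
    funext x
    simp only [MeasurableEquiv.symm_apply_apply]
  rw [hfun, ← MeasureTheory.Measure.map_map e.measurable hBm, hBlaw, hrew,
    CBR.map_withDensity_equiv e volume
      (fun y => ENNReal.ofReal (cbetaDens m ν n κ τ (e.symm y))), hmapvol,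
    CBR.withDensity_smul_measure' _ _ ENNReal.ofReal_ne_top _]
  congr 1
  funext y
  rw [← ENNReal.ofReal_mul (abs_nonneg _)]
  congr 1
  have hpt := CBR.density_pointwise hu hud hΘ ν n κ τ y
  rw [abs_inv]
  exact hpt

end
end
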